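/- For a classical-quantum state ρ_{AE} = (1/N)|0⟩⟨0|_A ⊗ |E₀⟩⟨E₀| + (1/N)|1⟩⟨1|_A ⊗ |E₁⟩⟨E₁| with N = ⟨E₀|E₀⟩ + ⟨E₁|E₁⟩, writing N⁰ = ⟨E₀|E₀⟩ > 0 and N¹ = ⟨E₁|E₁⟩ > 0, the conditional von Neumann entropy satisfies S(A|E) ≥ h(N⁰/(N⁰+N¹)) − h(λ), where λ = (1/2)(1 + √((N⁰−N¹)² + 4·Re²⟨E₀|E₁⟩)/(N⁰+N¹)) and h is the binary Shannon entropy. -/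

import Mathlib

/-- Binary Shannon entropy (base 2). -/
noncomputable def binEnt (x : ℝ) : ℝ :=
  -(x * Real.logb 2 x) - (1 - x) * Real.logb 2 (1 - x)

/-- Von Neumann entropy (base 2) of a Hermitian matrix, via its eigenvalues. -/
noncomputable def vNE {n : Type*} [Fintype n] [DecidableEq n] {ρ : Matrix n n ℂ}
    (h : ρ.IsHermitian) : ℝ :=
  -∑ i, h.eigenvalues i * Real.logb 2 (h.eigenvalues i)

open Matrix ComplexOrder

lemma trace_eq_sum_eigs' {n : Type*} [Fintype n] [DecidableEq n] {A : Matrix n n ℂ}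
    (hA : A.IsHermitian) : A.trace = ∑ i, ((hA.eigenvalues i : ℝ) : ℂ) := by
  set U : Matrix n n ℂ := (hA.eigenvectorUnitary : Matrix n n ℂ) with hU
  have hUU : star U * U = 1 := Unitary.star_mul_self_of_mem hA.eigenvectorUnitary.2
  calc A.trace = (U * diagonal (RCLike.ofReal ∘ hA.eigenvalues) * star U).trace := by
        exact congrArg Matrix.trace hA.spectral_theorem
    _ = (star U * U * diagonal (RCLike.ofReal ∘ hA.eigenvalues)).trace := by
        rw [Matrix.trace_mul_cycle, mul_assoc]
    _ = ∑ i, ((hA.eigenvalues i : ℝ) : ℂ) := by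
        rw [hUU, one_mul, trace_diagonal]
        rfl

lemma trace_sq_eq_sum_eigs_sq' {n : Type*} [Fintype n] [DecidableEq n] {A : Matrix n n ℂ}
    (hA : A.IsHermitian) : (A * A).trace = ∑ i, (((hA.eigenvalues i)^2 : ℝ) : ℂ) := by
  set U : Matrix n n ℂ := (hA.eigenvectorUnitary : Matrix n n ℂ) with hU
  set D : Matrix n n ℂ := diagonal (RCLike.ofReal ∘ hA.eigenvalues) with hD
  have hUU : star U * U = 1 := Unitary.star_mul_self_of_mem hA.eigenvectorUnitary.2
  have hA' : A = U * D * star U := hA.spectral_theorem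
  calc (A * A).trace = (U * D * (star U * U) * D * star U).trace := by
        rw [hA']; simp only [mul_assoc]
    _ = (star U * (U * (D * D))).trace := by
        rw [hUU, mul_one, Matrix.trace_mul_cycle]; simp only [mul_assoc]
    _ = ∑ i, (((hA.eigenvalues i)^2 : ℝ) : ℂ) := by
        rw [← mul_assoc, hUU, one_mul, hD, diagonal_mul_diagonal, trace_diagonal]
        simp [pow_two]

open Finset in
lemma sum_g_eq_pair' {n : Type*} [Fintype n] [DecidableEq n] (g : ℝ → ℝ) (hg0 : g 0 = 0)
    (lam : n → ℝ) (hcard : (Finset.univ.filter (fun i => lam i ≠ 0)).card ≤ 2)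
    {a b : ℝ} (ha : 0 ≤ a) (hb : 0 ≤ b)
    (hs : ∑ i, lam i = a + b) (hq : ∑ i, (lam i)^2 = a^2 + b^2) :
    ∑ i, g (lam i) = g a + g b := by
  classical
  set s := Finset.univ.filter (fun i => lam i ≠ 0) with hsdef
  have hzero : ∀ i ∈ Finset.univ, i ∉ s → lam i = 0 := by
    intro i _ hi
    by_contra h
    exact hi (by simp [hsdef, h])
  have hgs : ∑ i, g (lam i) = ∑ i ∈ s, g (lam i) :=
    (Finset.sum_subset (Finset.filter_subset _ _) (fun i hi hni => by
      rw [hzero i hi hni, hg0])).symm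
  have hss : ∑ i, lam i = ∑ i ∈ s, lam i :=
    (Finset.sum_subset (Finset.filter_subset _ _) (fun i hi hni => hzero i hi hni)).symm
  have hqs : ∑ i, (lam i)^2 = ∑ i ∈ s, (lam i)^2 :=
    (Finset.sum_subset (Finset.filter_subset _ _) (fun i hi hni => by
      rw [hzero i hi hni]; ring)).symm
  rw [hgs]
  rw [hss] at hs; rw [hqs] at hq
  interval_cases h : s.card
  · rw [Finset.card_eq_zero] at h
    rw [h] at hs hq ⊢
    simp only [Finset.sum_empty] at hs hq ⊢
    have ha0 : a = 0 := by nlinarith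
    have hb0 : b = 0 := by nlinarith
    simp [ha0, hb0, hg0]
  · rw [Finset.card_eq_one] at h
    obtain ⟨i, hi⟩ := h
    rw [hi] at hs hq ⊢
    simp only [Finset.sum_singleton] at hs hq ⊢
    have hab : a * b = 0 := by nlinarith
    rcases mul_eq_zero.mp hab with h | h
    · rw [h] at hs ⊢; rw [hg0]; rw [zero_add] at hs; rw [hs]; ring
    · rw [h] at hs ⊢; rw [hg0]; rw [add_zero] at hs; rw [hs]; ring
  · rw [Finset.card_eq_two] at h
    obtain ⟨i, j, hij, hij2⟩ := h
    rw [hij2] at hs hq ⊢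
    rw [Finset.sum_insert (by simp [hij]), Finset.sum_singleton] at hs hq ⊢
    have hprod : lam i * lam j = a * b := by nlinarith
    have : (lam i - a) * (lam i - b) = 0 := by linear_combination lam i * hs - hprod
    rcases mul_eq_zero.mp this with h | h
    · have hia : lam i = a := by linarith
      have : lam j = b := by linarith
      rw [hia, this]
    · have hib : lam i = b := by linarith
      have : lam j = a := by linarith
      rw [hib, this]; ring

lemma vNE_eq_pair' {n : Type*} [Fintype n] [DecidableEq n] {ρ : Matrix n n ℂ}
    (hA : ρ.IsHermitian) (hpsd : ρ.PosSemidef) (hrank : ρ.rank ≤ 2)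
    {a b : ℝ} (ha : 0 ≤ a) (hb : 0 ≤ b)
    (htr : ρ.trace = ((a + b : ℝ) : ℂ))
    (htr2 : (ρ * ρ).trace = ((a^2 + b^2 : ℝ) : ℂ)) :
    vNE hA = -(a * Real.logb 2 a) - b * Real.logb 2 b := by
  classical
  have hcard : (Finset.univ.filter (fun i => hA.eigenvalues i ≠ 0)).card ≤ 2 := by
    have h1 := hA.rank_eq_card_non_zero_eigs
    rw [Fintype.card_subtype] at h1
    omega
  have hs : ∑ i, hA.eigenvalues i = a + b := by
    have := trace_eq_sum_eigs' hA
    rw [htr] at this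
    exact_mod_cast this.symm
  have hq : ∑ i, (hA.eigenvalues i)^2 = a^2 + b^2 := by
    have := trace_sq_eq_sum_eigs_sq' hA
    rw [htr2] at this
    exact_mod_cast this.symm
  have := sum_g_eq_pair' (fun x => x * Real.logb 2 x) (by simp) hA.eigenvalues hcard ha hb hs hq
  rw [vNE, this]
  ring

lemma binEnt_eq_binEntropy (x : ℝ) : binEnt x = Real.binEntropy x / Real.log 2 := by
  rw [binEnt, Real.binEntropy, Real.logb, Real.logb, Real.log_inv, Real.log_inv]
  ring

/-- single-term case of the Tomamichel–Krawec key-rate theorem.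
For the cq state ρ_{AE} = (1/N)(|0⟩⟨0|⊗|E₀⟩⟨E₀| + |1⟩⟨1|⊗|E₁⟩⟨E₁|),
S(A|E) ≥ h(N⁰/(N⁰+N¹)) − h(λ). -/
theorem cq_conditional_entropy_lower_bound {d : ℕ}
    (E : Fin 2 → EuclideanSpace ℂ (Fin d))
    (N0 N1 : ℝ) (hN0 : N0 = ‖E 0‖ ^ 2) (hN1 : N1 = ‖E 1‖ ^ 2)
    (h0 : 0 < N0) (h1 : 0 < N1)
    (ρAE : Matrix (Fin 2 × Fin d) (Fin 2 × Fin d) ℂ)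
    (hρAE : ρAE = Matrix.of fun p q =>
      if p.1 = q.1 then (((N0 + N1 : ℝ) : ℂ))⁻¹ * E p.1 p.2 * star (E p.1 q.2) else 0)
    (hAE : ρAE.IsHermitian)
    (ρE : Matrix (Fin d) (Fin d) ℂ)
    (hρE : ρE = Matrix.of fun i j =>
      (((N0 + N1 : ℝ) : ℂ))⁻¹ * (E 0 i * star (E 0 j) + E 1 i * star (E 1 j)))
    (hE : ρE.IsHermitian)
    (lam : ℝ)
    (hlam : lam = 1 / 2 * (1 + Real.sqrt ((N0 - N1) ^ 2 +
      4 * ((inner ℂ (E 0) (E 1) : ℂ).re) ^ 2) / (N0 + N1))) :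
    vNE hAE - vNE hE ≥ binEnt (N0 / (N0 + N1)) - binEnt lam := by
  classical
  have hN : 0 < N0 + N1 := by positivity
  have hNne : ((N0 + N1 : ℝ) : ℂ) ≠ 0 := Complex.ofReal_ne_zero.mpr hN.ne'
  obtain ⟨tc, hc, hstc⟩ : ∃ z : ℂ, z * z = (((N0 + N1 : ℝ) : ℂ))⁻¹ ∧ star z = z := by
    refine ⟨((Real.sqrt (N0 + N1)⁻¹ : ℝ) : ℂ), ?_, ?_⟩
    · rw [← Complex.ofReal_mul, Real.mul_self_sqrt (by positivity), Complex.ofReal_inv]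
    · exact Complex.conj_ofReal _
  -- inner product sums
  have hinner : ∀ b b' : Fin 2, ∑ i, star (E b i) * E b' i = (inner ℂ (E b) (E b') : ℂ) := by
    intro b b'
    rw [PiLp.inner_apply]
    simp [RCLike.inner_apply, Complex.star_def]
    exact Finset.sum_congr rfl fun i _ => mul_comm _ _
  have hnorm : ∀ b : Fin 2, (inner ℂ (E b) (E b) : ℂ) = ((‖E b‖^2 : ℝ) : ℂ) := by
    intro b
    rw [inner_self_eq_norm_sq_to_K]
    norm_cast
  set g : ℂ := (inner ℂ (E 0) (E 1) : ℂ) with hgdef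
  clear_value g
  have hgconj : (inner ℂ (E 1) (E 0) : ℂ) = star g := by
    rw [hgdef, Complex.star_def]
    exact (inner_conj_symm (E 1) (E 0)).symm
  set R2 : ℝ := g.re^2 + g.im^2 with hR2def
  clear_value R2
  have hR2 : R2 = Complex.normSq g := by
    rw [hR2def, Complex.normSq_apply]; ring
  have hR2nn : 0 ≤ R2 := by rw [hR2def]; positivity
  have hns : Complex.normSq g = ‖g‖^2 := by
    rw [Complex.normSq_eq_norm_sq]
  -- Cauchy-Schwarz
  have hCS : R2 ≤ N0 * N1 := by
    have h := norm_inner_le_norm (𝕜 := ℂ) (E 0) (E 1)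
    rw [← hgdef] at h
    rw [hR2, hns, hN0, hN1]
    nlinarith [norm_nonneg g, norm_nonneg (E 0), norm_nonneg (E 1)]
  ----------------------------------------------------------------
  -- factorizations: PSD and rank
  ----------------------------------------------------------------
  set B : Matrix (Fin 2) (Fin 2 × Fin d) ℂ :=
    Matrix.of (fun b p => if p.1 = b then tc * star (E b p.2) else 0) with hBdef
  clear_value B
  have hfactAE : ρAE = Bᴴ * B := by
    rw [hρAE]
    ext p q
    obtain ⟨pb, pi⟩ := p
    obtain ⟨qb, qi⟩ := q
    have hsum : (Bᴴ * B) (pb, pi) (qb, qi)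
        = star (B 0 (pb, pi)) * B 0 (qb, qi) + star (B 1 (pb, pi)) * B 1 (qb, qi) := by
      rw [Matrix.mul_apply, Fin.sum_univ_two, Matrix.conjTranspose_apply,
        Matrix.conjTranspose_apply]
    rw [Matrix.of_apply, hsum, hBdef]
    simp only [Matrix.of_apply]
    have hc' : tc * tc = ((N0:ℂ) + (N1:ℂ))⁻¹ := by rw [hc]; push_cast; ring
    fin_cases pb <;> fin_cases qb <;> simp [hstc]
    · linear_combination -(E 0 pi * (starRingEnd ℂ) (E 0 qi)) * hc'
    · linear_combination -(E 1 pi * (starRingEnd ℂ) (E 1 qi)) * hc'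
  have hpsdAE : ρAE.PosSemidef := by
    rw [hfactAE]; exact Matrix.posSemidef_conjTranspose_mul_self B
  have hrankAE : ρAE.rank ≤ 2 := by
    rw [hfactAE]
    calc (Bᴴ * B).rank ≤ B.rank := Matrix.rank_mul_le_right _ _
      _ ≤ 2 := by simpa using Matrix.rank_le_card_height B
  set C : Matrix (Fin 2) (Fin d) ℂ :=
    Matrix.of (fun b i => tc * star (E b i)) with hCdef
  clear_value C
  have hfactE : ρE = Cᴴ * C := by
    rw [hρE]
    ext i j
    have hsum : (Cᴴ * C) i j = star (C 0 i) * C 0 j + star (C 1 i) * C 1 j := by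
      rw [Matrix.mul_apply, Fin.sum_univ_two, Matrix.conjTranspose_apply,
        Matrix.conjTranspose_apply]
    have hc' : tc * tc = ((N0:ℂ) + (N1:ℂ))⁻¹ := by rw [hc]; push_cast; ring
    rw [Matrix.of_apply, hsum, hCdef]
    simp [hstc]
    linear_combination -(E 0 i * (starRingEnd ℂ) (E 0 j) + E 1 i * (starRingEnd ℂ) (E 1 j)) * hc'
  have hpsdE : ρE.PosSemidef := by
    rw [hfactE]; exact Matrix.posSemidef_conjTranspose_mul_self C
  have hrankE : ρE.rank ≤ 2 := by
    rw [hfactE]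
    calc (Cᴴ * C).rank ≤ C.rank := Matrix.rank_mul_le_right _ _
      _ ≤ 2 := by simpa using Matrix.rank_le_card_height C
  clear hfactAE hfactE hBdef hCdef
  clear B C
  ----------------------------------------------------------------
  -- traces
  ----------------------------------------------------------------
  set c : ℂ := (((N0 + N1 : ℝ)) : ℂ)⁻¹ with hcdef2
  clear_value c
  have hS : ∀ b b' : Fin 2, ∑ i, E b i * star (E b' i) = (inner ℂ (E b') (E b) : ℂ) := by
    intro b b'
    rw [← hinner b' b]
    exact Finset.sum_congr rfl fun i _ => mul_comm _ _
  have htrAE : ρAE.trace = c * ((N0 : ℝ) : ℂ) + c * ((N1 : ℝ) : ℂ) := by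
    have key : ∀ b : Fin 2, ∑ i, c * E b i * star (E b i) = c * ((‖E b‖^2 : ℝ) : ℂ) := by
      intro b
      rw [← hnorm b, ← hS b b, Finset.mul_sum]
      exact Finset.sum_congr rfl fun i _ => by ring
    calc ρAE.trace = ∑ b : Fin 2, ∑ i, c * E b i * star (E b i) := by
          rw [Matrix.trace, Fintype.sum_prod_type]
          refine Finset.sum_congr rfl fun b _ => Finset.sum_congr rfl fun i _ => ?_
          rw [hρAE]
          simp [Matrix.diag_apply]
      _ = c * ((N0 : ℝ) : ℂ) + c * ((N1 : ℝ) : ℂ) := by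
          rw [Fin.sum_univ_two, key 0, key 1, ← hN0, ← hN1]
  have hterm : ∀ (b : Fin 2) (i : Fin d),
      ∑ q : Fin 2 × Fin d, ρAE (b, i) q * ρAE q (b, i)
        = ∑ j, (c * E b i * star (E b j)) * (c * E b j * star (E b i)) := by
    intro b i
    rw [Fintype.sum_prod_type]
    rw [Finset.sum_eq_single b]
    · exact Finset.sum_congr rfl fun j _ => by rw [hρAE]; simp
    · intro b' _ hb'
      apply Finset.sum_eq_zero
      intro j _
      rw [hρAE]
      simp [hb', Ne.symm hb']
    · intro h; exact absurd (Finset.mem_univ b) h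
  have hfac : ∀ b : Fin 2,
      ∑ i, ∑ j, (c * E b i * star (E b j)) * (c * E b j * star (E b i))
        = c * c * (((‖E b‖^2 : ℝ) : ℂ) * ((‖E b‖^2 : ℝ) : ℂ)) := by
    intro b
    rw [← hnorm b, ← hinner b b, Finset.sum_mul_sum, Finset.mul_sum]
    refine Finset.sum_congr rfl fun i _ => ?_
    rw [Finset.mul_sum]
    refine Finset.sum_congr rfl fun j _ => by ring
  have htrAE2 : (ρAE * ρAE).trace
      = c * c * (((N0 : ℝ) : ℂ) * ((N0 : ℝ) : ℂ)) + c * c * (((N1 : ℝ) : ℂ) * ((N1 : ℝ) : ℂ)) := by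
    rw [Matrix.trace]
    simp only [Matrix.diag_apply, Matrix.mul_apply]
    rw [Fintype.sum_prod_type, Fin.sum_univ_two]
    rw [Finset.sum_congr rfl fun i _ => hterm 0 i, Finset.sum_congr rfl fun i _ => hterm 1 i]
    rw [hfac 0, hfac 1, ← hN0, ← hN1]
  have htrE : ρE.trace = c * ((N0 : ℝ) : ℂ) + c * ((N1 : ℝ) : ℂ) := by
    rw [hρE, Matrix.trace]
    simp only [Matrix.diag_apply, Matrix.of_apply]
    rw [hN0, hN1, ← hnorm 0, ← hnorm 1, ← hS 0 0, ← hS 1 1, Finset.mul_sum, Finset.mul_sum,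
      ← Finset.sum_add_distrib]
    exact Finset.sum_congr rfl fun i _ => by ring
  have htrE2 : (ρE * ρE).trace
      = c * c * (((N0 : ℝ) : ℂ) * ((N0 : ℝ) : ℂ) + ((N1 : ℝ) : ℂ) * ((N1 : ℝ) : ℂ)
          + 2 * ((R2 : ℝ) : ℂ)) := by
    have hgg : g * star g = ((R2 : ℝ) : ℂ) := by
      rw [hR2, Complex.star_def, Complex.mul_conj]
    have key : ∑ i, ∑ j, ρE i j * ρE j i
        = c * c * ((inner ℂ (E 0) (E 0) : ℂ) * (inner ℂ (E 0) (E 0) : ℂ)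
          + (inner ℂ (E 1) (E 1) : ℂ) * (inner ℂ (E 1) (E 1) : ℂ)
          + (inner ℂ (E 0) (E 1) : ℂ) * (inner ℂ (E 1) (E 0) : ℂ)
          + (inner ℂ (E 1) (E 0) : ℂ) * (inner ℂ (E 0) (E 1) : ℂ)) := by
      rw [← hinner 0 0, ← hinner 1 1, ← hinner 0 1, ← hinner 1 0]
      rw [Finset.sum_mul_sum, Finset.sum_mul_sum, Finset.sum_mul_sum, Finset.sum_mul_sum]
      simp only [mul_add, Finset.mul_sum, ← Finset.sum_add_distrib]
      rw [Finset.sum_comm]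
      refine Finset.sum_congr rfl fun i _ => Finset.sum_congr rfl fun j _ => ?_
      rw [hρE]
      simp only [Matrix.of_apply]
      ring
    rw [Matrix.trace]
    simp only [Matrix.diag_apply, Matrix.mul_apply]
    rw [key, hgconj, ← hgdef, hnorm 0, hnorm 1, ← hN0, ← hN1]
    rw [show star g * g = g * star g from mul_comm _ _, hgg]
    ring
  ----------------------------------------------------------------
  -- the two nonzero eigenvalues
  ----------------------------------------------------------------
  set Dr : ℝ := Real.sqrt ((N0 - N1)^2 + 4*R2) with hDrdef
  clear_value Dr
  have hDrnn : 0 ≤ Dr := by rw [hDrdef]; exact Real.sqrt_nonneg _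
  have hDr2 : Dr^2 = (N0 - N1)^2 + 4*R2 := by
    rw [hDrdef]; exact Real.sq_sqrt (by nlinarith [hR2nn, sq_nonneg (N0 - N1)])
  have hDrle : Dr ≤ N0 + N1 := by
    rw [hDrdef, ← Real.sqrt_sq hN.le]
    apply Real.sqrt_le_sqrt
    nlinarith [hCS]
  set μ : ℝ := 1/2*(1 + Dr/(N0 + N1)) with hμdef
  clear_value μ
  have hμhalf : 1/2 ≤ μ := by
    rw [hμdef]
    have : 0 ≤ Dr/(N0+N1) := div_nonneg hDrnn hN.le
    linarith
  have hμ1 : μ ≤ 1 := by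
    rw [hμdef]
    have : Dr/(N0+N1) ≤ 1 := (div_le_one hN).mpr hDrle
    linarith
  have hμnn : 0 ≤ μ := by linarith
  have hμnn' : 0 ≤ 1 - μ := by linarith
  have ha : (0:ℝ) ≤ N0/(N0+N1) := by positivity
  have hb : (0:ℝ) ≤ N1/(N0+N1) := by positivity
  -- vNE hAE
  have htrAE' : ρAE.trace = ((N0/(N0+N1) + N1/(N0+N1) : ℝ) : ℂ) := by
    rw [htrAE, hcdef2]
    push_cast [hN.ne']
    ring
  have htrAE2' : (ρAE * ρAE).trace = (((N0/(N0+N1))^2 + (N1/(N0+N1))^2 : ℝ) : ℂ) := by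
    rw [htrAE2, hcdef2]
    push_cast [hN.ne']
    ring
  have hvAE : vNE hAE = -(N0/(N0+N1) * Real.logb 2 (N0/(N0+N1)))
      - N1/(N0+N1) * Real.logb 2 (N1/(N0+N1)) :=
    vNE_eq_pair' hAE hpsdAE hrankAE ha hb htrAE' htrAE2'
  -- vNE hE
  have htrE' : ρE.trace = ((μ + (1 - μ) : ℝ) : ℂ) := by
    rw [htrE, hcdef2]
    have h2 : μ + (1 - μ) = (1:ℝ) := by ring
    rw [h2]
    have h3 : ((N0:ℂ) + (N1:ℂ)) ≠ 0 := by
      rw [← Complex.ofReal_add]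
      exact Complex.ofReal_ne_zero.mpr hN.ne'
    push_cast
    field_simp
  have hreal : μ^2 + (1-μ)^2 = ((N0+N1)⁻¹)^2 * (N0^2 + N1^2 + 2*R2) := by
    have h1 : μ^2 + (1-μ)^2 = ((N0+N1)^2 + Dr^2)/(2*(N0+N1)^2) := by
      rw [hμdef]
      field_simp
      ring
    rw [h1, hDr2]
    field_simp
    ring
  have htrE2' : (ρE * ρE).trace = ((μ^2 + (1-μ)^2 : ℝ) : ℂ) := by
    rw [htrE2, hcdef2, hreal]
    push_cast
    ring
  have hvE : vNE hE = -(μ * Real.logb 2 μ) - (1-μ) * Real.logb 2 (1-μ) :=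
    vNE_eq_pair' hE hpsdE hrankE hμnn hμnn' htrE' htrE2'
  ----------------------------------------------------------------
  -- wrap up
  ----------------------------------------------------------------
  have hAEbin : vNE hAE = binEnt (N0/(N0+N1)) := by
    rw [hvAE, binEnt]
    have h2 : 1 - N0/(N0+N1) = N1/(N0+N1) := by
      field_simp
      ring
    rw [h2]
  have hEbin : vNE hE = binEnt μ := by
    rw [hvE, binEnt]
  have hlamhalf : 1/2 ≤ lam := by
    rw [hlam]
    have h2 : 0 ≤ Real.sqrt ((N0 - N1) ^ 2 + 4 * g.re ^ 2) / (N0+N1) :=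
      div_nonneg (Real.sqrt_nonneg _) hN.le
    linarith
  have hlamle : lam ≤ μ := by
    rw [hlam, hμdef]
    have h2 : Real.sqrt ((N0 - N1) ^ 2 + 4 * g.re ^ 2) ≤ Dr := by
      rw [hDrdef]
      apply Real.sqrt_le_sqrt
      rw [hR2def]
      linarith [sq_nonneg g.im]
    have h4 : Real.sqrt ((N0 - N1) ^ 2 + 4 * g.re ^ 2) / (N0+N1)
        ≤ Dr / (N0+N1) := by gcongr
    linarith
  have hbinmono : binEnt μ ≤ binEnt lam := by
    rw [binEnt_eq_binEntropy, binEnt_eq_binEntropy]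
    have hmem1 : lam ∈ Set.Icc (2⁻¹ : ℝ) 1 := by
      constructor
      · rw [show (2⁻¹:ℝ) = 1/2 by norm_num]; exact hlamhalf
      · linarith
    have hmem2 : μ ∈ Set.Icc (2⁻¹ : ℝ) 1 := by
      constructor
      · rw [show (2⁻¹:ℝ) = 1/2 by norm_num]; exact hμhalf
      · exact hμ1
    have hmono := Real.binEntropy_strictAntiOn.antitoneOn hmem1 hmem2 hlamle
    have hlog2 : (0:ℝ) < Real.log 2 := Real.log_pos (by norm_num)
    gcongr
  rw [ge_iff_le, hAEbin, hEbin]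
  linarith
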